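/- Let Ω ⊂ ℝ^m be a bounded domain with Lipschitz regular boundary, F ∈ L¹(Ω; ℝ^m), and H ∈ L^∞(Ω). Suppose u ∈ BV(Ω) is a minimizer for F̃_H with boundary trace u|_{∂Ω} = ψ ∈ L¹(∂Ω). Let φ ∈ BV(Ω) with φ|_{∂Ω} = 0, set dμ := Du + F d^m x and dν := Dφ, and write dμ = N₀|dμ| and dν = A₀|dμ| + dν_s^0 with dν_s^0 ⊥ |dμ|. Then F̃_H'(0+) = ∫_Ω N₀·A₀ |dμ| + ∫_Ω |dν_s^0| + ∫_Ω H φ d^m x ≥ 0 and F̃_H'(0−) = ∫_Ω N₀·A₀ |dμ| − ∫_Ω |dν_s^0| + ∫_Ω H φ d^m x ≤ 0. -/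

import Mathlib

open MeasureTheory Filter Set Topology Bornology
open scoped ENNReal NNReal InnerProductSpace

noncomputable section

/-- The (Euclidean) divergence of a vector field on `ℝ^m`. -/
def divg {m : ℕ} (φ : EuclideanSpace ℝ (Fin m) → EuclideanSpace ℝ (Fin m))
    (x : EuclideanSpace ℝ (Fin m)) : ℝ :=
  ∑ i, fderiv ℝ φ x (EuclideanSpace.single i 1) i

/-- The total variation `∫_Ω |Du + F d^m x|` of `u ∈ L¹(Ω)`, defined by duality:
`sup { ∫_Ω (−u div φ⃗ + F·φ⃗) : φ⃗ ∈ C¹_0(Ω), |φ⃗| ≤ 1 }`. -/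
def tvF {m : ℕ} (Ω : Set (EuclideanSpace ℝ (Fin m)))
    (F : EuclideanSpace ℝ (Fin m) → EuclideanSpace ℝ (Fin m))
    (u : EuclideanSpace ℝ (Fin m) → ℝ) : ℝ≥0∞ :=
  ⨆ (φ : EuclideanSpace ℝ (Fin m) → EuclideanSpace ℝ (Fin m)) (_ : ContDiff ℝ 1 φ)
    (_ : HasCompactSupport φ) (_ : tsupport φ ⊆ Ω) (_ : ∀ x, ‖φ x‖ ≤ 1),
    ENNReal.ofReal (∫ x in Ω, (-(u x) * divg φ x + ⟪F x, φ x⟫_ℝ))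

section Helpers
variable {α E : Type*} [MeasurableSpace α] [NormedAddCommGroup E] [InnerProductSpace ℝ E]

lemma integrable_inner_simple (g : SimpleFunc α E) {f : α → E} {μ : Measure α}
    (hf : Integrable f μ) : Integrable (fun x => ⟪g x, f x⟫_ℝ) μ := by
  obtain ⟨C, hC⟩ := g.exists_forall_norm_le
  refine Integrable.mono' (hf.norm.const_mul C)
    (AEStronglyMeasurable.inner g.aestronglyMeasurable hf.aestronglyMeasurable) ?_
  filter_upwards with x
  calc ‖⟪g x, f x⟫_ℝ‖ ≤ ‖g x‖ * ‖f x‖ := norm_inner_le_norm _ _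
    _ ≤ C * ‖f x‖ := mul_le_mul_of_nonneg_right (hC x) (norm_nonneg _)

lemma pairing_sum [CompleteSpace E]
    (μ₁ μ₂ μ₃ : Measure α) (f₁ f₂ f₃ : α → E)
    (h₁ : Integrable f₁ μ₁) (h₂ : Integrable f₂ μ₂) (h₃ : Integrable f₃ μ₃)
    (h : ∀ S : Set α, MeasurableSet S →
      ∫ x in S, f₁ x ∂μ₁ = (∫ x in S, f₂ x ∂μ₂) + ∫ x in S, f₃ x ∂μ₃)
    (g : SimpleFunc α E) :
    ∫ x, ⟪g x, f₁ x⟫_ℝ ∂μ₁ = (∫ x, ⟪g x, f₂ x⟫_ℝ ∂μ₂) + ∫ x, ⟪g x, f₃ x⟫_ℝ ∂μ₃ := by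
  induction g using SimpleFunc.induction with
  | @const c s hs =>
    have key : ∀ (μ : Measure α) (f : α → E), Integrable f μ →
        ∫ x, ⟪(SimpleFunc.piecewise s hs (SimpleFunc.const α c) (SimpleFunc.const α 0)) x,
          f x⟫_ℝ ∂μ = ⟪c, ∫ x in s, f x ∂μ⟫_ℝ := by
      intro μ f hfint
      rw [← integral_inner hfint.integrableOn c, ← integral_indicator hs]
      congr 1
      funext x
      by_cases hx : x ∈ s <;>
        simp [SimpleFunc.piecewise_apply, hx, Set.indicator_of_mem, Set.indicator_of_notMem]
    rw [key μ₁ f₁ h₁, key μ₂ f₂ h₂, key μ₃ f₃ h₃, h s hs, inner_add_right]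
  | @add g₁ g₂ _ ih₁ ih₂ =>
    have e : ∀ (μ : Measure α) (f : α → E), Integrable f μ →
        ∫ x, ⟪(g₁ + g₂) x, f x⟫_ℝ ∂μ =
          (∫ x, ⟪g₁ x, f x⟫_ℝ ∂μ) + ∫ x, ⟪g₂ x, f x⟫_ℝ ∂μ := by
      intro μ f hfint
      rw [← integral_add (integrable_inner_simple g₁ hfint) (integrable_inner_simple g₂ hfint)]
      congr 1; funext x
      simp [inner_add_left]
    rw [e μ₁ f₁ h₁, e μ₂ f₂ h₂, e μ₃ f₃ h₃, ih₁, ih₂]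
    ring

lemma exists_simpleFunc_close [MeasurableSpace E] [BorelSpace E] [SecondCountableTopology E]
    (μ : Measure α) [IsFiniteMeasure μ] {f : α → E} (hf : Measurable f)
    (hball : ∀ᵐ x ∂μ, ‖f x‖ ≤ 1) {η : ℝ} (hη : 0 < η) :
    ∃ g : SimpleFunc α E, (∀ x, ‖g x‖ ≤ 1) ∧ ∫ x, ‖g x - f x‖ ∂μ < η := by
  have h₀ : (0 : E) ∈ Metric.closedBall (0 : E) 1 := by simp
  have hmem : ∀ᵐ x ∂μ, f x ∈ closure (Metric.closedBall (0 : E) 1) := by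
    filter_upwards [hball] with x hx
    rw [Metric.isClosed_closedBall.closure_eq]
    simpa [Metric.mem_closedBall, dist_zero_right] using hx
  have hi : eLpNorm (fun x => f x - 0) 1 μ < ∞ := by
    have := eLpNorm_le_of_ae_bound (μ := μ) (p := 1) (f := fun x => f x - 0)
      (C := 1) (by simpa using hball)
    refine lt_of_le_of_lt this ?_
    exact ENNReal.mul_lt_top (ENNReal.rpow_lt_top_of_nonneg (by simp) (measure_ne_top μ _))
      ENNReal.ofReal_lt_top
  have htend := SimpleFunc.tendsto_approxOn_Lp_eLpNorm (p := 1) hf h₀ (by simp) hmem hi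
  have hev : ∀ᶠ n in atTop,
      eLpNorm (⇑(SimpleFunc.approxOn f hf (Metric.closedBall (0 : E) 1) 0 h₀ n) - f) 1 μ
        < ENNReal.ofReal η :=
    htend.eventually_lt_const (by simpa using ENNReal.ofReal_pos.2 hη)
  obtain ⟨n, hn⟩ := hev.exists
  set g := SimpleFunc.approxOn f hf (Metric.closedBall (0 : E) 1) 0 h₀ n with hg
  refine ⟨g, fun x => ?_, ?_⟩
  · have := SimpleFunc.approxOn_mem hf h₀ n x
    simpa [Metric.mem_closedBall, dist_zero_right] using this
  · have hmeas : AEStronglyMeasurable (fun x => g x - f x) μ :=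
      g.aestronglyMeasurable.sub hf.aestronglyMeasurable
    rw [integral_norm_eq_lintegral_enorm hmeas]
    have hlt : eLpNorm (fun x => g x - f x) 1 μ < ENNReal.ofReal η := by
      exact hn
    rw [eLpNorm_one_eq_lintegral_enorm] at hlt
    exact ENNReal.toReal_lt_of_lt_ofReal hlt

lemma SimpleFunc.integrable_fin (g : SimpleFunc α E) (μ : Measure α) [IsFiniteMeasure μ] :
    Integrable (⇑g) μ := by
  obtain ⟨C, hC⟩ := g.exists_forall_norm_le
  exact Integrable.mono' (integrable_const C) g.aestronglyMeasurable (ae_of_all _ hC)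

lemma inner_unit_self (v : E) : ⟪‖v‖⁻¹ • v, v⟫_ℝ = ‖v‖ := by
  rw [real_inner_smul_left, real_inner_self_eq_norm_mul_norm]
  rcases eq_or_ne ‖v‖ 0 with h | h
  · simp [h]
  · field_simp

lemma norm_unit_le_one (v : E) : ‖‖v‖⁻¹ • v‖ ≤ 1 := by
  rw [norm_smul]
  rcases eq_or_ne ‖v‖ 0 with h | h
  · simp [h]
  · rw [norm_inv, Real.norm_eq_abs, abs_of_nonneg (norm_nonneg v), inv_mul_cancel₀ h]

lemma tv_eq [MeasurableSpace E] [BorelSpace E] [SecondCountableTopology E] [CompleteSpace E]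
    (μτ μ0 νs : Measure α) [IsFiniteMeasure μτ] [IsFiniteMeasure μ0] [IsFiniteMeasure νs]
    (n n0 a0 ns : α → E)
    (hn : ∀ᵐ x ∂μτ, ‖n x‖ = 1) (hns : ∀ᵐ x ∂νs, ‖ns x‖ = 1)
    (hnint : Integrable n μτ) (hn0int : Integrable n0 μ0) (ha0int : Integrable a0 μ0)
    (hnsint : Integrable ns νs)
    (hsing : νs.MutuallySingular μ0)
    (ε : ℝ)
    (h : ∀ S : Set α, MeasurableSet S → ∫ x in S, n x ∂μτ =
      (∫ x in S, (n0 x + ε • a0 x) ∂μ0) + ∫ x in S, ε • ns x ∂νs) :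
    (μτ Set.univ).toReal = (∫ x, ‖n0 x + ε • a0 x‖ ∂μ0) + |ε| * (νs Set.univ).toReal := by
  set w : α → E := fun x => n0 x + ε • a0 x with hw
  have hwint : Integrable w μ0 := hn0int.add (ha0int.smul ε)
  have hεns : Integrable (fun x => ε • ns x) νs := hnsint.smul ε
  set c : ℝ := (νs Set.univ).toReal with hc
  set R : ℝ := (∫ x, ‖w x‖ ∂μ0) + |ε| * c with hR
  -- the key identity for simple functions
  have key : ∀ g : SimpleFunc α E, ∫ x, ⟪g x, n x⟫_ℝ ∂μτ =
      (∫ x, ⟪g x, w x⟫_ℝ ∂μ0) + ∫ x, ⟪g x, ε • ns x⟫_ℝ ∂νs :=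
    pairing_sum μτ μ0 νs n w (fun x => ε • ns x) hnint hwint hεns h
  -- bound 1
  have bound1 : ∀ g : SimpleFunc α E, (∀ x, ‖g x‖ ≤ 1) →
      ∫ x, ⟪g x, n x⟫_ℝ ∂μτ ≤ (μτ Set.univ).toReal := by
    intro g hg
    have : ∫ x, ⟪g x, n x⟫_ℝ ∂μτ ≤ ∫ _, (1 : ℝ) ∂μτ := by
      refine integral_mono_ae (integrable_inner_simple g hnint) (integrable_const 1) ?_
      filter_upwards [hn] with x hx
      calc ⟪g x, n x⟫_ℝ ≤ ‖g x‖ * ‖n x‖ := real_inner_le_norm _ _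
        _ ≤ 1 := by rw [hx, mul_one]; exact hg x
    simpa [integral_const, smul_eq_mul, measureReal_def] using this
  -- bound 2
  have bound2 : ∀ g : SimpleFunc α E, (∀ x, ‖g x‖ ≤ 1) →
      (∫ x, ⟪g x, w x⟫_ℝ ∂μ0) + ∫ x, ⟪g x, ε • ns x⟫_ℝ ∂νs ≤ R := by
    intro g hg
    have p1 : ∫ x, ⟪g x, w x⟫_ℝ ∂μ0 ≤ ∫ x, ‖w x‖ ∂μ0 := by
      refine integral_mono (integrable_inner_simple g hwint) hwint.norm fun x => ?_
      calc ⟪g x, w x⟫_ℝ ≤ ‖g x‖ * ‖w x‖ := real_inner_le_norm _ _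
        _ ≤ 1 * ‖w x‖ := mul_le_mul_of_nonneg_right (hg x) (norm_nonneg _)
        _ = ‖w x‖ := one_mul _
    have p2 : ∫ x, ⟪g x, ε • ns x⟫_ℝ ∂νs ≤ ∫ _, |ε| ∂νs := by
      refine integral_mono_ae (integrable_inner_simple g hεns) (integrable_const _) ?_
      filter_upwards [hns] with x hx
      calc ⟪g x, ε • ns x⟫_ℝ ≤ ‖g x‖ * ‖ε • ns x‖ := real_inner_le_norm _ _
        _ ≤ 1 * (|ε| * ‖ns x‖) := by
            rw [norm_smul, Real.norm_eq_abs]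
            exact mul_le_mul_of_nonneg_right (hg x) (by positivity)
        _ = |ε| := by rw [hx, one_mul, mul_one]
    have p2' : ∫ _, |ε| ∂νs = |ε| * c := by
      simp [integral_const, smul_eq_mul, hc, mul_comm, measureReal_def]
    rw [hR]
    linarith [p1, p2, p2'.le, p2'.ge]
  have keyle : ∀ g : SimpleFunc α E, (∀ x, ‖g x‖ ≤ 1) → ∫ x, ⟪g x, n x⟫_ℝ ∂μτ ≤ R := by
    intro g hg
    rw [key g]
    exact bound2 g hg
  refine le_antisymm ?_ ?_
  · -- upper bound
      refine le_of_forall_pos_le_add fun η hη => ?_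
      set nm : α → E := hnint.aestronglyMeasurable.mk n with hnm
      have hnmeq : n =ᵐ[μτ] nm := hnint.aestronglyMeasurable.ae_eq_mk
      have hnm_meas : Measurable nm := hnint.aestronglyMeasurable.stronglyMeasurable_mk.measurable
      have hball : ∀ᵐ x ∂μτ, ‖nm x‖ ≤ 1 := by
        filter_upwards [hn, hnmeq] with x h1 h2
        rw [← h2, h1]
      obtain ⟨g, hg1, hg2⟩ := exists_simpleFunc_close μτ hnm_meas hball hη
      have hgint : Integrable (⇑g) μτ := by
        obtain ⟨C, hC⟩ := g.exists_forall_norm_le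
        exact Integrable.mono' (integrable_const C) g.aestronglyMeasurable (ae_of_all _ hC)
      have hginner : Integrable (fun x => ⟪g x, n x⟫_ℝ) μτ := by
        obtain ⟨C, hC⟩ := g.exists_forall_norm_le
        refine Integrable.mono' (hnint.norm.const_mul C)
          (AEStronglyMeasurable.inner g.aestronglyMeasurable hnint.aestronglyMeasurable) ?_
        filter_upwards with x
        calc ‖⟪g x, n x⟫_ℝ‖ ≤ ‖g x‖ * ‖n x‖ := norm_inner_le_norm _ _
          _ ≤ C * ‖n x‖ := mul_le_mul_of_nonneg_right (hC x) (norm_nonneg _)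
      have hnninner : Integrable (fun x => ⟪n x, n x⟫_ℝ) μτ := by
        refine (integrable_const (1 : ℝ)).congr ?_
        filter_upwards [hn] with x hx
        rw [real_inner_self_eq_norm_mul_norm, hx, one_mul]
      have step1 : (μτ Set.univ).toReal = ∫ x, ⟪n x, n x⟫_ℝ ∂μτ := by
        have : ∫ x, ⟪n x, n x⟫_ℝ ∂μτ = ∫ _, (1 : ℝ) ∂μτ := by
          refine integral_congr_ae ?_
          filter_upwards [hn] with x hx
          rw [real_inner_self_eq_norm_mul_norm, hx, one_mul]
        rw [this]; simp [integral_const, smul_eq_mul, measureReal_def]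
      have step2 : (∫ x, ⟪n x, n x⟫_ℝ ∂μτ) - ∫ x, ⟪g x, n x⟫_ℝ ∂μτ ≤ η := by
        have e1 : (∫ x, ⟪n x, n x⟫_ℝ ∂μτ) - ∫ x, ⟪g x, n x⟫_ℝ ∂μτ
            = ∫ x, ⟪n x - g x, n x⟫_ℝ ∂μτ := by
          rw [← integral_sub hnninner hginner]
          congr 1; funext x; rw [inner_sub_left]
        have e2 : ∫ x, ⟪n x - g x, n x⟫_ℝ ∂μτ ≤ ∫ x, ‖n x - g x‖ ∂μτ := by
          refine integral_mono_ae ?_ ((hnint.sub hgint).norm) ?_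
          · rw [show (fun x => ⟪n x - g x, n x⟫_ℝ) = fun x => ⟪n x, n x⟫_ℝ - ⟪g x, n x⟫_ℝ by
              funext x; rw [inner_sub_left]]
            exact hnninner.sub hginner
          · filter_upwards [hn] with x hx
            calc ⟪n x - g x, n x⟫_ℝ ≤ ‖n x - g x‖ * ‖n x‖ := real_inner_le_norm _ _
              _ = ‖n x - g x‖ := by rw [hx, mul_one]
        have e3 : ∫ x, ‖n x - g x‖ ∂μτ = ∫ x, ‖g x - nm x‖ ∂μτ := by
          refine integral_congr_ae ?_
          filter_upwards [hnmeq] with x hx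
          rw [← hx, norm_sub_rev]
        rw [e1]
        calc ∫ x, ⟪n x - g x, n x⟫_ℝ ∂μτ ≤ ∫ x, ‖n x - g x‖ ∂μτ := e2
          _ = ∫ x, ‖g x - nm x‖ ∂μτ := e3
          _ ≤ η := hg2.le
      have := keyle g hg1
      linarith [step1, step2, this]
  · -- lower bound
      classical
      refine le_of_forall_pos_le_add fun η hη => ?_
      obtain ⟨s, hsm, hs1, hs2⟩ := hsing
      -- measurable versions
      set n0m : α → E := hn0int.aestronglyMeasurable.mk n0 with hn0m
      have hn0meq : n0 =ᵐ[μ0] n0m := hn0int.aestronglyMeasurable.ae_eq_mk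
      have hn0m_meas : Measurable n0m := hn0int.aestronglyMeasurable.stronglyMeasurable_mk.measurable
      set a0m : α → E := ha0int.aestronglyMeasurable.mk a0 with ha0m
      have ha0meq : a0 =ᵐ[μ0] a0m := ha0int.aestronglyMeasurable.ae_eq_mk
      have ha0m_meas : Measurable a0m := ha0int.aestronglyMeasurable.stronglyMeasurable_mk.measurable
      set nsm : α → E := hnsint.aestronglyMeasurable.mk ns with hnsm
      have hnsmeq : ns =ᵐ[νs] nsm := hnsint.aestronglyMeasurable.ae_eq_mk
      have hnsm_meas : Measurable nsm := hnsint.aestronglyMeasurable.stronglyMeasurable_mk.measurable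
      set wm : α → E := fun x => n0m x + ε • a0m x with hwm
      have hwm_meas : Measurable wm := hn0m_meas.add (ha0m_meas.const_smul ε)
      have hweq : w =ᵐ[μ0] wm := by
        filter_upwards [hn0meq, ha0meq] with x h1 h2
        rw [hw, hwm]; dsimp only; rw [h1, h2]
      set sg : ℝ := if 0 ≤ ε then 1 else -1 with hsg
      have hsgabs : |sg| = 1 := by rw [hsg]; split <;> simp
      have hεsg : sg * ε = |ε| := by
        rw [hsg]; rcases le_or_gt 0 ε with h | h
        · rw [if_pos h, one_mul, abs_of_nonneg h]
        · rw [if_neg (not_le.2 h), abs_of_neg h]; ring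
      set f : α → E := fun x => if x ∈ s then (‖wm x‖⁻¹ • wm x) else sg • nsm x with hf
      have hf_meas : Measurable f :=
        Measurable.ite hsm ((hwm_meas.norm.inv).smul hwm_meas) (hnsm_meas.const_smul sg)
      -- the approximating measure
      set dd : α → ℝ≥0 := fun x => ‖wm x‖₊ with hdd
      have hdd_meas : Measurable dd := hwm_meas.nnnorm
      set lam : Measure α := μ0.withDensity (fun x => (dd x : ℝ≥0∞)) + νs with hlam
      have hwd_fin : μ0.withDensity (fun x => (dd x : ℝ≥0∞)) Set.univ < ⊤ := by
        rw [withDensity_apply _ MeasurableSet.univ, Measure.restrict_univ]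
        have : ∫⁻ x, (dd x : ℝ≥0∞) ∂μ0 = ∫⁻ x, ‖w x‖₊ ∂μ0 := by
          refine lintegral_congr_ae ?_
          filter_upwards [hweq] with x hx
          rw [hdd]; dsimp only; rw [hx]
        rw [this]
        exact hwint.hasFiniteIntegral
      have hlamfin : IsFiniteMeasure lam := by
        constructor
        rw [hlam, Measure.add_apply]
        exact ENNReal.add_lt_top.2 ⟨hwd_fin, measure_lt_top νs _⟩
      -- a.e. membership facts
      have hμ0s : ∀ᵐ x ∂μ0, x ∈ s := by
        rw [ae_iff]
        exact hs2
      have hwds : ∀ᵐ x ∂(μ0.withDensity (fun x => (dd x : ℝ≥0∞))), x ∈ s :=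
        (withDensity_absolutelyContinuous μ0 _).ae_le hμ0s
      have hνss : ∀ᵐ x ∂νs, x ∉ s := by
        rw [ae_iff]
        simpa [not_not] using hs1
      -- ‖f‖ ≤ 1 a.e. lam
      have hfball : ∀ᵐ x ∂lam, ‖f x‖ ≤ 1 := by
        rw [hlam, ae_add_measure_iff]
        constructor
        · filter_upwards [hwds] with x hx
          rw [hf]; dsimp only; rw [if_pos hx]
          exact norm_unit_le_one _
        · filter_upwards [hνss, hns, hnsmeq] with x hx h1 h2
          rw [hf]; dsimp only; rw [if_neg hx, norm_smul, Real.norm_eq_abs, hsgabs, one_mul, ← h2, h1]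
      have hpos : (0:ℝ) < 1 + |ε| := by positivity
      obtain ⟨g, hg1, hg2⟩ := exists_simpleFunc_close lam hf_meas hfball (div_pos hη hpos)
      set wd : Measure α := μ0.withDensity (fun x => (dd x : ℝ≥0∞)) with hwdd
      haveI : IsFiniteMeasure wd := ⟨hwd_fin⟩
      have integrable_inner_simple : ∀ (g : SimpleFunc α E) (f : α → E) (μ : Measure α),
          Integrable f μ → Integrable (fun x => ⟪g x, f x⟫_ℝ) μ := by
        intro g f μ hf
        obtain ⟨C, hC⟩ := g.exists_forall_norm_le
        refine Integrable.mono' (hf.norm.const_mul C)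
          (AEStronglyMeasurable.inner g.aestronglyMeasurable hf.aestronglyMeasurable) ?_
        filter_upwards with x
        calc ‖⟪g x, f x⟫_ℝ‖ ≤ ‖g x‖ * ‖f x‖ := norm_inner_le_norm _ _
          _ ≤ C * ‖f x‖ := mul_le_mul_of_nonneg_right (hC x) (norm_nonneg _)
      -- `f` pairs correctly
      have hfw : (fun x => ⟪f x, w x⟫_ℝ) =ᵐ[μ0] (fun x => ‖w x‖) := by
        filter_upwards [hμ0s, hweq] with x hx hwx
        rw [hf]; dsimp only; rw [if_pos hx, ← hwx]
        exact inner_unit_self _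
      have hfint1 : Integrable (fun x => ⟪f x, w x⟫_ℝ) μ0 := hwint.norm.congr hfw.symm
      have hfns : (fun x => ⟪f x, ε • ns x⟫_ℝ) =ᵐ[νs] (fun _ => |ε|) := by
        filter_upwards [hνss, hns, hnsmeq] with x hx h1 h2
        rw [hf]; dsimp only
        rw [if_neg hx, ← h2, real_inner_smul_left, real_inner_smul_right,
          real_inner_self_eq_norm_mul_norm, h1]
        rw [← hεsg]; ring
      have hfint2 : Integrable (fun x => ⟪f x, ε • ns x⟫_ℝ) νs := (integrable_const |ε|).congr hfns.symm
      have C1 : ∫ x, ‖w x‖ ∂μ0 = ∫ x, ⟪f x, w x⟫_ℝ ∂μ0 := (integral_congr_ae hfw).symm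
      have C2 : |ε| * c = ∫ x, ⟪f x, ε • ns x⟫_ℝ ∂νs := by
        rw [integral_congr_ae hfns]
        simp [integral_const, smul_eq_mul, hc, mul_comm, measureReal_def]
      -- f bounded a.e. each measure
      have hfb0 : ∀ᵐ x ∂μ0, ‖f x‖ ≤ 1 := by
        filter_upwards [hμ0s] with x hx
        rw [hf]; dsimp only; rw [if_pos hx]
        exact norm_unit_le_one _
      have hfbs : ∀ᵐ x ∂νs, ‖f x‖ ≤ 1 := by
        filter_upwards [hνss, hns, hnsmeq] with x hx h1 h2
        rw [hf]; dsimp only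
        rw [if_neg hx, norm_smul, Real.norm_eq_abs, hsgabs, one_mul, ← h2, h1]
      have hfbwd : ∀ᵐ x ∂wd, ‖f x‖ ≤ 1 := by
        filter_upwards [hwds] with x hx
        rw [hf]; dsimp only; rw [if_pos hx]
        exact norm_unit_le_one _
      have hfgmeas : Measurable (fun x => ‖f x - g x‖) := (hf_meas.sub g.measurable).norm
      -- integrability of ‖f - g‖ wrt the various measures
      have hfgint : ∀ (μ : Measure α) [IsFiniteMeasure μ], (∀ᵐ x ∂μ, ‖f x‖ ≤ 1) →
          Integrable (fun x => ‖f x - g x‖) μ := by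
        intro μ _ hb
        refine Integrable.mono' (integrable_const 2) hfgmeas.aestronglyMeasurable ?_
        filter_upwards [hb] with x hx
        rw [Real.norm_eq_abs, abs_of_nonneg (norm_nonneg _)]
        calc ‖f x - g x‖ ≤ ‖f x‖ + ‖g x‖ := norm_sub_le _ _
          _ ≤ 1 + 1 := add_le_add hx (hg1 x)
          _ = 2 := by norm_num
      have hfgwd : Integrable (fun x => ‖f x - g x‖) wd := hfgint wd hfbwd
      have hfgνs : Integrable (fun x => ‖f x - g x‖) νs := hfgint νs hfbs
      have hsplit : ∫ x, ‖f x - g x‖ ∂lam = (∫ x, ‖f x - g x‖ ∂wd) + ∫ x, ‖f x - g x‖ ∂νs := by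
        rw [hlam]
        exact integral_add_measure hfgwd hfgνs
      -- D1
      have hgw : Integrable (fun x => ⟪g x, w x⟫_ℝ) μ0 := integrable_inner_simple g w μ0 hwint
      have hprod_int : Integrable (fun x => ‖f x - g x‖ * ‖w x‖) μ0 := by
        refine Integrable.mono' (hwint.norm.const_mul 2)
          (hfgmeas.aestronglyMeasurable.mul hwint.aestronglyMeasurable.norm) ?_
        filter_upwards [hfb0] with x hx
        rw [Real.norm_eq_abs, abs_of_nonneg (by positivity)]
        refine mul_le_mul_of_nonneg_right ?_ (norm_nonneg _)
        calc ‖f x - g x‖ ≤ ‖f x‖ + ‖g x‖ := norm_sub_le _ _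
          _ ≤ 2 := by linarith [hg1 x]
      have D1 : (∫ x, ⟪f x, w x⟫_ℝ ∂μ0) - ∫ x, ⟪g x, w x⟫_ℝ ∂μ0
          ≤ ∫ x, ‖f x - g x‖ * ‖w x‖ ∂μ0 := by
        rw [← integral_sub hfint1 hgw]
        refine integral_mono ?_ hprod_int fun x => ?_
        · exact (hfint1.sub hgw).congr (Filter.Eventually.of_forall fun x => rfl)
        · dsimp only
          calc ⟪f x, w x⟫_ℝ - ⟪g x, w x⟫_ℝ = ⟪f x - g x, w x⟫_ℝ := (inner_sub_left _ _ _).symm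
            _ ≤ ‖f x - g x‖ * ‖w x‖ := real_inner_le_norm _ _
      have W1 : ∫ x, ‖f x - g x‖ * ‖w x‖ ∂μ0 = ∫ x, ‖f x - g x‖ ∂wd := by
        rw [hwdd, integral_withDensity_eq_integral_smul hdd_meas]
        refine integral_congr_ae ?_
        filter_upwards [hweq] with x hx
        simp only [hdd, NNReal.smul_def, coe_nnnorm, smul_eq_mul]
        rw [← hx]; ring
      -- D2
      have hgns : Integrable (fun x => ⟪g x, ε • ns x⟫_ℝ) νs := integrable_inner_simple g _ νs hεns
      have D2 : (∫ x, ⟪f x, ε • ns x⟫_ℝ ∂νs) - ∫ x, ⟪g x, ε • ns x⟫_ℝ ∂νs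
          ≤ |ε| * ∫ x, ‖f x - g x‖ ∂νs := by
        rw [← integral_sub hfint2 hgns, ← integral_const_mul]
        refine integral_mono_ae ?_ (hfgνs.const_mul _) ?_
        · exact (hfint2.sub hgns).congr (Filter.Eventually.of_forall fun x => rfl)
        · filter_upwards [hns] with x hx
          calc ⟪f x, ε • ns x⟫_ℝ - ⟪g x, ε • ns x⟫_ℝ = ⟪f x - g x, ε • ns x⟫_ℝ :=
                (inner_sub_left _ _ _).symm
            _ ≤ ‖f x - g x‖ * ‖ε • ns x‖ := real_inner_le_norm _ _
            _ = |ε| * ‖f x - g x‖ := by rw [norm_smul, Real.norm_eq_abs, hx, mul_one, mul_comm]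
      -- conclude
      have hg2' : ∫ x, ‖f x - g x‖ ∂lam < η / (1 + |ε|) := by
        have : ∫ x, ‖f x - g x‖ ∂lam = ∫ x, ‖g x - f x‖ ∂lam := by
          congr 1; funext x; rw [norm_sub_rev]
        rw [this]; exact hg2
      have hwd_nonneg : 0 ≤ ∫ x, ‖f x - g x‖ ∂wd := integral_nonneg fun x => norm_nonneg _
      have hνs_nonneg : 0 ≤ ∫ x, ‖f x - g x‖ ∂νs := integral_nonneg fun x => norm_nonneg _
      have hwdle : ∫ x, ‖f x - g x‖ ∂wd ≤ ∫ x, ‖f x - g x‖ ∂lam := by linarith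
      have hνsle : ∫ x, ‖f x - g x‖ ∂νs ≤ ∫ x, ‖f x - g x‖ ∂lam := by linarith
      have hmul : |ε| * ∫ x, ‖f x - g x‖ ∂νs ≤ |ε| * ∫ x, ‖f x - g x‖ ∂lam :=
        mul_le_mul_of_nonneg_left hνsle (abs_nonneg ε)
      have hfin : (1 + |ε|) * ∫ x, ‖f x - g x‖ ∂lam < η := by
        calc (1 + |ε|) * ∫ x, ‖f x - g x‖ ∂lam < (1 + |ε|) * (η / (1 + |ε|)) :=
              mul_lt_mul_of_pos_left hg2' hpos
          _ = η := by field_simp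
      have hkey := key g
      have hb1 := bound1 g hg1
      rw [hR]
      rw [W1] at D1
      linarith [hwdle, hmul, hfin]


lemma hasDerivAt_norm_integral
    (μ0 : Measure α) [IsFiniteMeasure μ0] (n0 a0 : α → E)
    (hn0 : ∀ᵐ x ∂μ0, ‖n0 x‖ = 1)
    (hn0int : Integrable n0 μ0) (ha0int : Integrable a0 μ0) :
    HasDerivAt (fun ε : ℝ => ∫ x, ‖n0 x + ε • a0 x‖ ∂μ0)
      (∫ x, ⟪n0 x, a0 x⟫_ℝ ∂μ0) 0 := by
  have hlip : ∀ᵐ x ∂μ0, LipschitzOnWith (Real.nnabs ‖a0 x‖)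
      (fun ε : ℝ => ‖n0 x + ε • a0 x‖) (Metric.ball (0:ℝ) 1) := by
    filter_upwards with x
    refine LipschitzOnWith.mono ?_ (Set.subset_univ _)
    rw [lipschitzOnWith_univ]
    refine LipschitzWith.of_dist_le_mul fun s t => ?_
    rw [Real.dist_eq, Real.dist_eq]
    have habs : |‖n0 x + s • a0 x‖ - ‖n0 x + t • a0 x‖|
        ≤ ‖(n0 x + s • a0 x) - (n0 x + t • a0 x)‖ := abs_norm_sub_norm_le _ _
    have hsub : (n0 x + s • a0 x) - (n0 x + t • a0 x) = (s - t) • a0 x := by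
      rw [sub_smul]; abel
    rw [hsub, norm_smul, Real.norm_eq_abs] at habs
    calc |‖n0 x + s • a0 x‖ - ‖n0 x + t • a0 x‖| ≤ |s - t| * ‖a0 x‖ := habs
      _ = ↑(Real.nnabs ‖a0 x‖) * |s - t| := by
          rw [Real.coe_nnabs, abs_of_nonneg (norm_nonneg _), mul_comm]
  have hdiff : ∀ᵐ x ∂μ0, HasDerivAt (fun ε : ℝ => ‖n0 x + ε • a0 x‖) (⟪n0 x, a0 x⟫_ℝ) 0 := by
    filter_upwards [hn0] with x hx
    set ip := ⟪n0 x, a0 x⟫_ℝ with hip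
    set na := ‖a0 x‖ ^ 2 with hna
    have keyfun : (fun ε : ℝ => ‖n0 x + ε • a0 x‖)
        = fun ε : ℝ => Real.sqrt (1 + 2 * ip * ε + na * ε ^ 2) := by
      funext ε
      have h1 : ‖n0 x + ε • a0 x‖ ^ 2 = 1 + 2 * ip * ε + na * ε ^ 2 := by
        rw [norm_add_sq_real, hx, real_inner_smul_right, norm_smul, Real.norm_eq_abs,
          mul_pow, sq_abs]
        ring
      rw [← Real.sqrt_sq (norm_nonneg (n0 x + ε • a0 x)), h1]
    rw [keyfun]
    have hq : HasDerivAt (fun ε : ℝ => 1 + 2 * ip * ε + na * ε ^ 2) (2 * ip) 0 := by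
      have h1 : HasDerivAt (fun ε : ℝ => 2 * ip * ε) (2 * ip) 0 := by
        simpa using (hasDerivAt_id (0:ℝ)).const_mul (2 * ip)
      have h2 : HasDerivAt (fun ε : ℝ => na * ε ^ 2) 0 0 := by
        simpa using (hasDerivAt_pow 2 (0:ℝ)).const_mul na
      exact (((hasDerivAt_const (0:ℝ) (1:ℝ)).add h1).add h2).congr_deriv (by ring)
    have hne : (1:ℝ) + 2 * ip * 0 + na * 0 ^ 2 ≠ 0 := by norm_num
    have hsqrt := Real.hasDerivAt_sqrt hne
    have := hsqrt.comp 0 hq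
    have hval : (1:ℝ) + 2 * ip * 0 + na * 0 ^ 2 = 1 := by ring
    rw [hval, Real.sqrt_one] at this
    simpa [Function.comp_def] using this
  have h := hasDerivAt_integral_of_dominated_loc_of_lip (μ := μ0)
    (F := fun (ε : ℝ) (x : α) => ‖n0 x + ε • a0 x‖)
    (F' := fun x => ⟪n0 x, a0 x⟫_ℝ) (x₀ := 0) (bound := fun x => ‖a0 x‖)
    (Metric.ball_mem_nhds 0 one_pos)
    (Filter.Eventually.of_forall fun ε =>
      (hn0int.aestronglyMeasurable.add (ha0int.aestronglyMeasurable.const_smul ε)).norm)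
    (by simpa using hn0int.norm)
    (hn0int.aestronglyMeasurable.inner ha0int.aestronglyMeasurable)
    hlip ha0int.norm hdiff
  exact h.2

end Helpers

lemma divg_neg {m : ℕ} (ψ : EuclideanSpace ℝ (Fin m) → EuclideanSpace ℝ (Fin m))
    (x : EuclideanSpace ℝ (Fin m)) : divg (fun y => -(ψ y)) x = -divg ψ x := by
  unfold divg
  rw [← Finset.sum_neg_distrib]
  congr 1
  funext i
  rw [fderiv_fun_neg]
  simp

lemma tvF_const_mul {m : ℕ} (Ω : Set (EuclideanSpace ℝ (Fin m)))
    (w : EuclideanSpace ℝ (Fin m) → ℝ) (c : ℝ) :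
    tvF Ω (fun _ => 0) (fun x => c * w x) = ENNReal.ofReal |c| * tvF Ω (fun _ => 0) w := by
  unfold tvF
  have hI : ∀ (v : EuclideanSpace ℝ (Fin m) → ℝ)
      (ψ : EuclideanSpace ℝ (Fin m) → EuclideanSpace ℝ (Fin m)),
      (∫ x in Ω, (-(v x) * divg ψ x + ⟪(fun _ => (0 : EuclideanSpace ℝ (Fin m))) x, ψ x⟫_ℝ))
        = ∫ x in Ω, (-(v x) * divg ψ x) := by
    intro v ψ
    simp
  simp_rw [hI]
  have hscale : ∀ (ψ : EuclideanSpace ℝ (Fin m) → EuclideanSpace ℝ (Fin m)),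
      (∫ x in Ω, (-(c * w x) * divg ψ x)) = c * ∫ x in Ω, (-(w x) * divg ψ x) := by
    intro ψ
    rw [← integral_const_mul]
    exact integral_congr_ae (Filter.Eventually.of_forall fun x => by ring)
  simp_rw [hscale]
  have main : ∀ c' : ℝ,
      (⨆ (ψ : EuclideanSpace ℝ (Fin m) → EuclideanSpace ℝ (Fin m)) (_ : ContDiff ℝ 1 ψ)
        (_ : HasCompactSupport ψ) (_ : tsupport ψ ⊆ Ω) (_ : ∀ x, ‖ψ x‖ ≤ 1),
        ENNReal.ofReal (c' * ∫ x in Ω, (-(w x) * divg ψ x)))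
      ≤ ⨆ (ψ : EuclideanSpace ℝ (Fin m) → EuclideanSpace ℝ (Fin m)) (_ : ContDiff ℝ 1 ψ)
        (_ : HasCompactSupport ψ) (_ : tsupport ψ ⊆ Ω) (_ : ∀ x, ‖ψ x‖ ≤ 1),
        ENNReal.ofReal ((-c') * ∫ x in Ω, (-(w x) * divg ψ x)) := by
    intro c'
    refine iSup_le fun ψ => iSup_le fun h1 => iSup_le fun h2 => iSup_le fun h3 =>
      iSup_le fun h4 => ?_
    have h1n : ContDiff ℝ 1 (fun x => -(ψ x)) := h1.neg
    have h2n : HasCompactSupport (fun x => -(ψ x)) := h2.neg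
    have h3n : tsupport (fun x => -(ψ x)) ⊆ Ω := by
      have : tsupport (fun x => -(ψ x)) = tsupport ψ := by
        unfold tsupport
        congr 1
        ext x
        simp
      rwa [this]
    have h4n : ∀ x, ‖-(ψ x)‖ ≤ 1 := fun x => by rw [norm_neg]; exact h4 x
    have hIneg : (∫ x in Ω, (-(w x) * divg (fun y => -(ψ y)) x))
        = -∫ x in Ω, (-(w x) * divg ψ x) := by
      rw [← integral_neg]
      refine integral_congr_ae (Filter.Eventually.of_forall fun x => ?_)
      simp only [divg_neg]
      ring
    have heq : ENNReal.ofReal (c' * ∫ x in Ω, (-(w x) * divg ψ x))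
        = ENNReal.ofReal ((-c') * ∫ x in Ω, (-(w x) * divg (fun y => -(ψ y)) x)) := by
      rw [hIneg]
      congr 1
      ring
    rw [heq]
    refine le_iSup_of_le (fun y => -(ψ y)) ?_
    rw [iSup_pos h1n, iSup_pos h2n, iSup_pos h3n, iSup_pos h4n]
  rcases le_or_gt 0 c with hc | hc
  · rw [abs_of_nonneg hc]
    simp_rw [ENNReal.ofReal_mul hc, ENNReal.mul_iSup]
  · rw [abs_of_neg hc]
    have hcn : (0:ℝ) ≤ -c := by linarith
    have : (⨆ (ψ : EuclideanSpace ℝ (Fin m) → EuclideanSpace ℝ (Fin m)) (_ : ContDiff ℝ 1 ψ)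
        (_ : HasCompactSupport ψ) (_ : tsupport ψ ⊆ Ω) (_ : ∀ x, ‖ψ x‖ ≤ 1),
        ENNReal.ofReal (c * ∫ x in Ω, (-(w x) * divg ψ x)))
        = ⨆ (ψ : EuclideanSpace ℝ (Fin m) → EuclideanSpace ℝ (Fin m)) (_ : ContDiff ℝ 1 ψ)
        (_ : HasCompactSupport ψ) (_ : tsupport ψ ⊆ Ω) (_ : ∀ x, ‖ψ x‖ ≤ 1),
        ENNReal.ofReal ((-c) * ∫ x in Ω, (-(w x) * divg ψ x)) := by
      refine le_antisymm (main c) ?_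
      have := main (-c)
      rwa [neg_neg] at this
    rw [this]
    simp_rw [ENNReal.ofReal_mul hcn, ENNReal.mul_iSup]


/-- **Corollary B′: necessary first-variation conditions at a BV minimizer.**
Let `Ω ⊂ ℝ^m` be a bounded domain with Lipschitz boundary (uniform cone condition),
`F ∈ L¹(Ω; ℝ^m)`, `H ∈ L^∞(Ω)`, and let `u ∈ BV(Ω)` be a minimizer of
`F̃_H(v) = ∫_Ω |Dv + F d^m x| + ∫_Ω H v` among competitors `u + w` with `w ∈ BV(Ω)`
of zero trace (zero trace of `w` is encoded by `|D(w·1_Ω)|(ℝ^m) = |Dw|(Ω)`).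
Let `φ ∈ BV(Ω)` have zero trace, let `dμ := Du + F d^m x`, `dν := Dφ`, and let
`μtv ε`, `N ε`, `A ε`, `νstv ε`, `Ns ε` encode the polar/Radon–Nikodym decompositions
`dμ_ε = N_ε |dμ_ε|` (`dμ_ε := dμ + ε dν`), `dν = A_ε |dμ_ε| + dν_s^ε`,
`dν_s^ε ⊥ |dμ_ε|`, linked to the functional by `|dμ_ε|(X) = ∫_Ω |D(u+εφ) + F d^m x|`.
Then `F̃_H′(0+) = ∫ N₀·A₀ |dμ| + ∫ |dν_s⁰| + ∫_Ω Hφ ≥ 0` and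
`F̃_H′(0−) = ∫ N₀·A₀ |dμ| − ∫ |dν_s⁰| + ∫_Ω Hφ ≤ 0`. -/
theorem first_variation_inequalities_at_BV_minimizer
    {m k : ℕ} (Ω : Set (EuclideanSpace ℝ (Fin m)))
    (hopen : IsOpen Ω) (hconn : IsConnected Ω) (hbdd : IsBounded Ω)
    -- Lipschitz regular boundary: uniform interior cone condition
    (hlip : ∃ r δ : ℝ, 0 < r ∧ 0 < δ ∧ ∀ p ∈ frontier Ω,
      ∃ e : EuclideanSpace ℝ (Fin m), ‖e‖ = 1 ∧
        ∀ x ∈ closure Ω ∩ Metric.ball p r, ∀ t : ℝ, 0 < t → t < r →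
          Metric.ball (x + t • e) (δ * t) ⊆ Ω)
    (F : EuclideanSpace ℝ (Fin m) → EuclideanSpace ℝ (Fin m))
    (hFint : IntegrableOn F Ω)
    -- `H ∈ L^∞(Ω)`
    (Hf : EuclideanSpace ℝ (Fin m) → ℝ)
    (hHmeas : AEStronglyMeasurable Hf (volume.restrict Ω))
    (hHbdd : ∃ C : ℝ, ∀ x ∈ Ω, |Hf x| ≤ C)
    -- `u ∈ BV(Ω)`
    (u : EuclideanSpace ℝ (Fin m) → ℝ)
    (huint : IntegrableOn u Ω) (huBV : tvF Ω (fun _ => 0) u ≠ ⊤)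
    (huF : tvF Ω F u ≠ ⊤)
    -- `u` is a minimizer for `F̃_H` (Definition 1.2)
    (hmin : ∀ w : EuclideanSpace ℝ (Fin m) → ℝ, IntegrableOn w Ω →
      tvF Ω (fun _ => 0) w ≠ ⊤ →
      tvF Set.univ (fun _ => 0) (Set.indicator Ω w) = tvF Ω (fun _ => 0) w →
      tvF Ω F (fun x => u x + w x) ≠ ⊤ →
      (tvF Ω F u).toReal + ∫ x in Ω, Hf x * u x ≤
        (tvF Ω F (fun x => u x + w x)).toReal + ∫ x in Ω, Hf x * (u x + w x))
    -- `φ ∈ BV(Ω)` with zero trace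
    (φ : EuclideanSpace ℝ (Fin m) → ℝ)
    (hφint : IntegrableOn φ Ω) (hφBV : tvF Ω (fun _ => 0) φ ≠ ⊤)
    (hφtrace : tvF Set.univ (fun _ => 0) (Set.indicator Ω φ) = tvF Ω (fun _ => 0) φ)
    -- polar / Radon–Nikodym data for `dμ_ε = (Du + F d^m x) + ε Dφ` and `dν = Dφ`
    (μtv : ℝ → Measure (EuclideanSpace ℝ (Fin m)))
    (N A : ℝ → EuclideanSpace ℝ (Fin m) → EuclideanSpace ℝ (Fin k))
    (νtv : Measure (EuclideanSpace ℝ (Fin m)))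
    (Nν : EuclideanSpace ℝ (Fin m) → EuclideanSpace ℝ (Fin k))
    (νstv : ℝ → Measure (EuclideanSpace ℝ (Fin m)))
    (Ns : ℝ → EuclideanSpace ℝ (Fin m) → EuclideanSpace ℝ (Fin k))
    (hμfin : ∀ ε, IsFiniteMeasure (μtv ε))
    (hνfin : IsFiniteMeasure νtv)
    (hνsfin : ∀ ε, IsFiniteMeasure (νstv ε))
    (hN1 : ∀ ε, ∀ᵐ x ∂(μtv ε), ‖N ε x‖ = 1)
    (hNν1 : ∀ᵐ x ∂νtv, ‖Nν x‖ = 1)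
    (hNs1 : ∀ ε, ∀ᵐ x ∂(νstv ε), ‖Ns ε x‖ = 1)
    (hNint : ∀ ε, Integrable (N ε) (μtv ε))
    (hAint : ∀ ε, Integrable (A ε) (μtv ε))
    (hNνint : Integrable Nν νtv)
    (hNsint : ∀ ε, Integrable (Ns ε) (νstv ε))
    (hsing : ∀ ε, (νstv ε).MutuallySingular (μtv ε))
    (hadd : ∀ ε : ℝ, ∀ S : Set (EuclideanSpace ℝ (Fin m)), MeasurableSet S →
      ∫ x in S, N ε x ∂(μtv ε) = (∫ x in S, N 0 x ∂(μtv 0)) + ε • ∫ x in S, Nν x ∂νtv)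
    (hRN : ∀ ε : ℝ, ∀ S : Set (EuclideanSpace ℝ (Fin m)), MeasurableSet S →
      ∫ x in S, Nν x ∂νtv = (∫ x in S, A ε x ∂(μtv ε)) + ∫ x in S, Ns ε x ∂(νstv ε))
    -- links with the functional: `|dμ_ε|(X) = ∫_Ω |D(u+εφ) + F d^m x|`, `|dν|(X) = ∫_Ω |Dφ|`
    (hlink : ∀ ε : ℝ, μtv ε Set.univ = tvF Ω F (fun x => u x + ε * φ x))
    (hνlink : νtv Set.univ = tvF Ω (fun _ => 0) φ) :
    (HasDerivWithinAt
        (fun ε : ℝ => (μtv ε Set.univ).toReal + ∫ x in Ω, Hf x * (u x + ε * φ x))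
        ((∫ x, ⟪N 0 x, A 0 x⟫_ℝ ∂(μtv 0)) + (νstv 0 Set.univ).toReal +
          ∫ x in Ω, Hf x * φ x) (Set.Ici 0) 0 ∧
      0 ≤ (∫ x, ⟪N 0 x, A 0 x⟫_ℝ ∂(μtv 0)) + (νstv 0 Set.univ).toReal +
          ∫ x in Ω, Hf x * φ x) ∧
    (HasDerivWithinAt
        (fun ε : ℝ => (μtv ε Set.univ).toReal + ∫ x in Ω, Hf x * (u x + ε * φ x))
        ((∫ x, ⟪N 0 x, A 0 x⟫_ℝ ∂(μtv 0)) - (νstv 0 Set.univ).toReal +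
          ∫ x in Ω, Hf x * φ x) (Set.Iic 0) 0 ∧
      (∫ x, ⟪N 0 x, A 0 x⟫_ℝ ∂(μtv 0)) - (νstv 0 Set.univ).toReal +
          ∫ x in Ω, Hf x * φ x ≤ 0) := by
  classical
  haveI := hνsfin 0
  haveI := hμfin 0
  have hΩmeas : MeasurableSet Ω := hopen.measurableSet
  -- Step A : formula for the total variation
  have hformula : ∀ ε : ℝ, ((μtv ε) Set.univ).toReal =
      (∫ x, ‖N 0 x + ε • A 0 x‖ ∂(μtv 0)) + |ε| * ((νstv 0) Set.univ).toReal := by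
    intro ε
    haveI := hμfin ε
    refine tv_eq (μtv ε) (μtv 0) (νstv 0) (N ε) (N 0) (A 0) (Ns 0) (hN1 ε) (hNs1 0)
      (hNint ε) (hNint 0) (hAint 0) (hNsint 0) (hsing 0) ε ?_
    intro S hS
    rw [hadd ε S hS, hRN 0 S hS, smul_add]
    have e1 : ∫ x in S, (N 0 x + ε • A 0 x) ∂(μtv 0)
        = (∫ x in S, N 0 x ∂(μtv 0)) + ε • ∫ x in S, A 0 x ∂(μtv 0) := by
      rw [← integral_smul]
      exact integral_add ((hNint 0).integrableOn) (((hAint 0).smul ε).integrableOn)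
    have e2 : ∫ x in S, ε • Ns 0 x ∂(νstv 0) = ε • ∫ x in S, Ns 0 x ∂(νstv 0) :=
      integral_smul ε _
    rw [e1, e2, add_assoc]
  -- H-part linearity
  obtain ⟨C, hC⟩ := hHbdd
  have hHae : ∀ᵐ x ∂(volume.restrict Ω), ‖Hf x‖ ≤ C := by
    rw [ae_restrict_iff' hΩmeas]
    exact ae_of_all _ fun x hx => by rw [Real.norm_eq_abs]; exact hC x hx
  have hHu : Integrable (fun x => Hf x * u x) (volume.restrict Ω) :=
    huint.bdd_mul hHmeas hHae
  have hHφ : Integrable (fun x => Hf x * φ x) (volume.restrict Ω) :=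
    hφint.bdd_mul hHmeas hHae
  have hHlin : ∀ ε : ℝ, ∫ x in Ω, Hf x * (u x + ε * φ x)
      = (∫ x in Ω, Hf x * u x) + ε * ∫ x in Ω, Hf x * φ x := by
    intro ε
    calc ∫ x in Ω, Hf x * (u x + ε * φ x)
        = ∫ x in Ω, (Hf x * u x + ε * (Hf x * φ x)) :=
          integral_congr_ae (ae_of_all _ fun x => by ring)
      _ = (∫ x in Ω, Hf x * u x) + ε * ∫ x in Ω, Hf x * φ x := by
          rw [integral_add hHu (hHφ.const_mul ε), integral_const_mul]
  -- Φ = G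
  have hΦG : ∀ ε : ℝ, ((μtv ε) Set.univ).toReal + ∫ x in Ω, Hf x * (u x + ε * φ x)
      = ((∫ x, ‖N 0 x + ε • A 0 x‖ ∂(μtv 0)) + |ε| * ((νstv 0) Set.univ).toReal)
        + ((∫ x in Ω, Hf x * u x) + ε * ∫ x in Ω, Hf x * φ x) := by
    intro ε
    rw [hformula ε, hHlin ε]
  -- derivative of the norm integral
  have hG1 : HasDerivAt (fun ε : ℝ => ∫ x, ‖N 0 x + ε • A 0 x‖ ∂(μtv 0))
      (∫ x, ⟪N 0 x, A 0 x⟫_ℝ ∂(μtv 0)) 0 :=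
    hasDerivAt_norm_integral (μtv 0) (N 0) (A 0) (hN1 0) (hNint 0) (hAint 0)
  -- derivatives of the absolute value part
  have habsR : HasDerivWithinAt (fun ε : ℝ => |ε| * ((νstv 0) Set.univ).toReal)
      ((νstv 0) Set.univ).toReal (Set.Ici 0) 0 := by
    refine ((hasDerivAt_mul_const (x := (0:ℝ))
      ((νstv 0) Set.univ).toReal).hasDerivWithinAt).congr (fun x hx => ?_) (by simp)
    rw [abs_of_nonneg hx]
  have habsL : HasDerivWithinAt (fun ε : ℝ => |ε| * ((νstv 0) Set.univ).toReal)
      (-((νstv 0) Set.univ).toReal) (Set.Iic 0) 0 := by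
    refine (((hasDerivAt_mul_const (x := (0:ℝ))
      ((νstv 0) Set.univ).toReal).neg).hasDerivWithinAt).congr (fun x hx => ?_) (by simp)
    rw [abs_of_nonpos hx]
    simp only [Pi.neg_apply]
    ring
  have hlin : HasDerivAt
      (fun ε : ℝ => (∫ x in Ω, Hf x * u x) + ε * ∫ x in Ω, Hf x * φ x)
      (∫ x in Ω, Hf x * φ x) 0 :=
    (hasDerivAt_mul_const _).const_add _
  -- full derivatives of Φ on both sides
  have hDR : HasDerivWithinAt
      (fun ε : ℝ => ((μtv ε) Set.univ).toReal + ∫ x in Ω, Hf x * (u x + ε * φ x))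
      ((∫ x, ⟪N 0 x, A 0 x⟫_ℝ ∂(μtv 0)) + ((νstv 0) Set.univ).toReal
        + ∫ x in Ω, Hf x * φ x) (Set.Ici 0) 0 := by
    have hG := (hG1.hasDerivWithinAt.add habsR).add hlin.hasDerivWithinAt
    exact hG.congr (fun x _ => hΦG x) (hΦG 0)
  have hDL : HasDerivWithinAt
      (fun ε : ℝ => ((μtv ε) Set.univ).toReal + ∫ x in Ω, Hf x * (u x + ε * φ x))
      ((∫ x, ⟪N 0 x, A 0 x⟫_ℝ ∂(μtv 0)) - ((νstv 0) Set.univ).toReal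
        + ∫ x in Ω, Hf x * φ x) (Set.Iic 0) 0 := by
    have hG := (hG1.hasDerivWithinAt.add habsL).add hlin.hasDerivWithinAt
    have hG' := hG.congr (fun x _ => hΦG x) (hΦG 0)
    exact hG'.congr_deriv (by ring)
  -- minimality : Φ 0 ≤ Φ ε for all ε
  have hmin' : ∀ ε : ℝ,
      ((μtv 0) Set.univ).toReal + (∫ x in Ω, Hf x * (u x + 0 * φ x))
        ≤ ((μtv ε) Set.univ).toReal + ∫ x in Ω, Hf x * (u x + ε * φ x) := by
    intro ε
    have hw1 : IntegrableOn (fun x => ε * φ x) Ω := hφint.const_mul ε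
    have hw2 : tvF Ω (fun _ => 0) (fun x => ε * φ x) ≠ ⊤ := by
      rw [tvF_const_mul]
      exact ENNReal.mul_ne_top ENNReal.ofReal_ne_top hφBV
    have hw3 : tvF Set.univ (fun _ => 0) (Set.indicator Ω (fun x => ε * φ x))
        = tvF Ω (fun _ => 0) (fun x => ε * φ x) := by
      have hind : Set.indicator Ω (fun x => ε * φ x) = fun x => ε * Set.indicator Ω φ x :=
        funext fun x => Set.indicator_const_mul Ω φ ε x
      rw [hind, tvF_const_mul, tvF_const_mul, hφtrace]
    have hw4 : tvF Ω F (fun x => u x + (fun x => ε * φ x) x) ≠ ⊤ := by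
      haveI := hμfin ε
      have := hlink ε
      simp only at this ⊢
      rw [← this]
      exact measure_ne_top _ _
    have h := hmin (fun x => ε * φ x) hw1 hw2 hw3 hw4
    have e0 : tvF Ω F u = (μtv 0) Set.univ := by
      rw [hlink 0]
      congr 1
      funext x
      ring
    have eε : tvF Ω F (fun x => u x + (fun x => ε * φ x) x) = (μtv ε) Set.univ := by
      rw [hlink ε]
    have eH0 : ∫ x in Ω, Hf x * (u x + 0 * φ x) = ∫ x in Ω, Hf x * u x :=
      integral_congr_ae (ae_of_all _ fun x => by ring)
    have eHε : ∫ x in Ω, Hf x * (u x + (fun x => ε * φ x) x)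
        = ∫ x in Ω, Hf x * (u x + ε * φ x) := by rfl
    rw [e0, eε, eHε] at h
    rw [eH0]
    exact h
  -- the set identities
  have hIci : Set.Ici (0:ℝ) \ {0} = Set.Ioi 0 := by
    ext x
    simp only [Set.mem_diff, Set.mem_Ici, Set.mem_singleton_iff, Set.mem_Ioi]
    constructor
    · rintro ⟨h1, h2⟩
      exact lt_of_le_of_ne h1 (Ne.symm h2)
    · intro h
      exact ⟨le_of_lt h, ne_of_gt h⟩
  have hIic : Set.Iic (0:ℝ) \ {0} = Set.Iio 0 := by
    ext x
    simp only [Set.mem_diff, Set.mem_Iic, Set.mem_singleton_iff, Set.mem_Iio]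
    constructor
    · rintro ⟨h1, h2⟩
      exact lt_of_le_of_ne h1 h2
    · intro h
      exact ⟨le_of_lt h, ne_of_lt h⟩
  refine ⟨⟨hDR, ?_⟩, hDL, ?_⟩
  · -- nonnegativity of the right derivative
    have h := hDR
    rw [hasDerivWithinAt_iff_tendsto_slope, hIci] at h
    refine ge_of_tendsto h ?_
    filter_upwards [self_mem_nhdsWithin] with x hx
    rw [slope_def_field]
    refine div_nonneg ?_ ?_
    · have := hmin' x
      linarith
    · simp only [sub_zero]
      exact le_of_lt hx
  · -- nonpositivity of the left derivative
    have h := hDL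
    rw [hasDerivWithinAt_iff_tendsto_slope, hIic] at h
    refine le_of_tendsto h ?_
    filter_upwards [self_mem_nhdsWithin] with x hx
    rw [slope_def_field]
    rw [div_nonpos_iff]
    left
    constructor
    · have := hmin' x
      linarith
    · simp only [sub_zero]
      exact le_of_lt hx


end
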